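/- Let i_* : A → B be a faithful exact functor between Grothendieck categories with enough projectives, admitting a left adjoint i^* and a right adjoint i^!. Suppose B is Gorenstein, and that on the full subcategory FD(B) of objects of finite projective dimension there is an equivalence Φ : A ≃ A with i^*|_{FD(B)} a retract of a product of copies of (Φ ∘ i^!)|_{FD(B)} and (Φ ∘ i^!)|_{FD(B)} a retract of a coproduct of copies of i^*|_{FD(B)}. Then both i^* and i^! preserve injective objects and projective objects and are exact when restricted to FD(B). -/

import Mathlib

open CategoryTheory CategoryTheory.Limits

universe v u u'

namespace Stmt3

variable {A : Type u} [Category.{v} A] [Abelian A]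

/-- `PdimLE n M` : `M` has projective dimension at most `n`. -/
def PdimLE : ℕ → A → Prop
  | 0, M => Projective M
  | n + 1, M => Projective M ∨
      ∃ (K P : A) (i : K ⟶ P) (p : P ⟶ M) (w : i ≫ p = 0),
        Projective P ∧ (ShortComplex.mk i p w).ShortExact ∧ PdimLE n K

/-- `IdimLE n M` : `M` has injective dimension at most `n`. -/
def IdimLE : ℕ → A → Prop
  | 0, M => Injective M
  | n + 1, M => Injective M ∨
      ∃ (I K : A) (i : M ⟶ I) (p : I ⟶ K) (w : i ≫ p = 0),
        Injective I ∧ (ShortComplex.mk i p w).ShortExact ∧ IdimLE n K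

def FinPdim (M : A) : Prop := ∃ n, PdimLE n M

def FinIdim (M : A) : Prop := ∃ n, IdimLE n M

variable (A)

/-- The full subcategory of objects of finite projective dimension. -/
abbrev FD := ObjectProperty.FullSubcategory (fun X : A => FinPdim X)

/-- The inclusion of the subcategory of objects of finite projective dimension. -/
abbrev fdι : FD A ⥤ A := ObjectProperty.ι _

/-- Gorenstein abelian category. -/
def IsGorenstein : Prop :=
  (∀ M : A, FinPdim M ↔ FinIdim M) ∧
  (∃ n : ℕ, (∀ M : A, FinPdim M → PdimLE n M) ∧ (∀ M : A, FinIdim M → IdimLE n M)) ∧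
  (∃ G : A, IsSeparator G ∧ FinPdim G)

variable {A}

/-- `F` is a retract of `G` in a functor category. -/
def IsFunctorRetract {D : Type u'} [Category.{v} D] (F G : D ⥤ A) : Prop :=
  ∃ (σ : F ⟶ G) (ρ : G ⟶ F), σ ≫ ρ = 𝟙 F

/-- The product of `I` copies of a functor `G`. -/
noncomputable abbrev piPow {D : Type u'} [Category.{v} D] (I : Type v) [HasLimits A]
    (G : D ⥤ A) : D ⥤ A :=
  G ⋙ Functor.const (Discrete I) ⋙ lim

/-- The coproduct of `I` copies of a functor `G`. -/
noncomputable abbrev sigmaPow {D : Type u'} [Category.{v} D] (I : Type v) [HasColimits A]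
    (G : D ⥤ A) : D ⥤ A :=
  G ⋙ Functor.const (Discrete I) ⋙ colim

/-- The *Gorenstein transfer property* for a pair of functors `i^*, i^! : B ⥤ A`
(the left and right adjoints of some `i_* : A ⥤ B`): restricted to the full subcategory
`FD B` of objects of `B` of finite projective dimension, there is a self-equivalence `Φ`
of `A` such that `i^*|_FD` is a retract of a product of copies of `(Φ ∘ i^!)|_FD` and
`(Φ ∘ i^!)|_FD` is a retract of a coproduct of copies of `i^*|_FD`. -/
def GTProperty {B : Type u} [Category.{v} B] [Abelian B]
    [HasLimits A] [HasColimits A] (iStar iBang : B ⥤ A) : Prop :=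
  ∃ Φ : A ≌ A,
    (∃ I : Type v,
      IsFunctorRetract (fdι B ⋙ iStar) (piPow I (fdι B ⋙ iBang ⋙ Φ.functor))) ∧
    (∃ I : Type v,
      IsFunctorRetract (fdι B ⋙ iBang ⋙ Φ.functor) (sigmaPow I (fdι B ⋙ iStar)))

end Stmt3

open Stmt3

section Aux

open CategoryTheory CategoryTheory.Limits

variable {C : Type*} [Category C]

lemma injective_of_retract' {X Y : C} (s : X ⟶ Y) (r : Y ⟶ X) (h : s ≫ r = 𝟙 X)
    (hY : Injective Y) : Injective X := by
  constructor
  intro W Z g f hf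
  haveI := hY
  refine ⟨Injective.factorThru (g ≫ s) f ≫ r, ?_⟩
  rw [← Category.assoc, Injective.comp_factorThru, Category.assoc, h, Category.comp_id]

lemma projective_of_retract' {X Y : C} (s : X ⟶ Y) (r : Y ⟶ X) (h : s ≫ r = 𝟙 X)
    (hY : Projective Y) : Projective X := by
  constructor
  intro Z W f e he
  haveI := hY
  refine ⟨s ≫ Projective.factorThru (r ≫ f) e, ?_⟩
  rw [Category.assoc, Projective.factorThru_comp, ← Category.assoc, h, Category.id_comp]

lemma mono_of_retract_nat {D : Type*} [Category D] {F G : C ⥤ D}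
    (s : F ⟶ G) (r : G ⟶ F) (h : s ≫ r = 𝟙 F) {X Y : C} (f : X ⟶ Y)
    (hG : Mono (G.map f)) : Mono (F.map f) := by
  constructor
  intro Z a b hab
  have hX : s.app X ≫ r.app X = 𝟙 _ := by rw [← NatTrans.comp_app, h]; rfl
  have h2 : (a ≫ s.app X) ≫ G.map f = (b ≫ s.app X) ≫ G.map f := by
    simp only [Category.assoc, ← s.naturality f]
    simp only [← Category.assoc, hab]
  have h3 : a ≫ s.app X = b ≫ s.app X := by
    haveI := hG; exact (cancel_mono _).1 h2
  calc a = a ≫ s.app X ≫ r.app X := by rw [hX, Category.comp_id]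
    _ = b ≫ s.app X ≫ r.app X := by
        rw [← Category.assoc, h3, Category.assoc]
    _ = b := by rw [hX, Category.comp_id]

lemma epi_of_retract_nat {D : Type*} [Category D] {F G : C ⥤ D}
    (s : F ⟶ G) (r : G ⟶ F) (h : s ≫ r = 𝟙 F) {X Y : C} (f : X ⟶ Y)
    (hG : Epi (G.map f)) : Epi (F.map f) := by
  constructor
  intro Z a b hab
  have hY : s.app Y ≫ r.app Y = 𝟙 _ := by rw [← NatTrans.comp_app, h]; rfl
  have h2 : G.map f ≫ r.app Y ≫ a = G.map f ≫ r.app Y ≫ b := by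
    simp only [← Category.assoc, r.naturality f]
    simp only [Category.assoc, hab]
  have h3 : r.app Y ≫ a = r.app Y ≫ b := by
    haveI := hG; exact (cancel_epi _).1 h2
  calc a = (s.app Y ≫ r.app Y) ≫ a := by rw [hY, Category.id_comp]
    _ = (s.app Y ≫ r.app Y) ≫ b := by rw [Category.assoc, h3, Category.assoc]
    _ = b := by rw [hY, Category.id_comp]

end Aux


/-- Let `i_* : A ⥤ B` be a faithful exact functor between Grothendieck
categories with enough projectives, with left adjoint `i^*` and right adjoint `i^!`,
satisfying the Gorenstein transfer property, and let `B` be Gorenstein.  Then `i^*` and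
`i^!` preserve injective objects and projective objects, and are exact on the subcategory
of objects of finite projective dimension (they send short exact sequences with all terms
of finite projective dimension to short exact sequences). -/
theorem adjoints_preserve_inj_proj_and_exact_on_FD
    {A B : Type u} [Category.{v} A] [Category.{v} B] [Abelian A] [Abelian B]
    [HasLimits A] [HasColimits A] [HasFilteredColimits A] [AB5 A] [HasSeparator A]
    [EnoughProjectives A]
    [HasLimits B] [HasColimits B] [HasFilteredColimits B] [AB5 B] [HasSeparator B]
    [EnoughProjectives B]
    (iLow : A ⥤ B) [iLow.Additive] [iLow.Faithful]
    [PreservesFiniteLimits iLow] [PreservesFiniteColimits iLow]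
    (iStar iBang : B ⥤ A) [iStar.Additive] [iBang.Additive]
    (adj₁ : iStar ⊣ iLow) (adj₂ : iLow ⊣ iBang)
    (hGT : GTProperty iStar iBang) (hGor : IsGorenstein B) :
    (∀ X : B, Injective X → Injective (iStar.obj X) ∧ Injective (iBang.obj X)) ∧
    (∀ X : B, Projective X → Projective (iStar.obj X) ∧ Projective (iBang.obj X)) ∧
    (∀ S : ShortComplex B, S.ShortExact →
      FinPdim S.X₁ → FinPdim S.X₂ → FinPdim S.X₃ →
      (S.map iStar).ShortExact ∧ (S.map iBang).ShortExact) := by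
  classical
  obtain ⟨Φ, ⟨Iι, s1, r1, hs1⟩, ⟨Jι, s2, r2, hs2⟩⟩ := hGT
  -- basic exactness instances
  haveI hL1 : PreservesColimitsOfSize.{0, 0} iStar := adj₁.leftAdjoint_preservesColimits
  haveI hR1 : PreservesLimitsOfSize.{0, 0} iBang := adj₂.rightAdjoint_preservesLimits
  haveI hlim : PreservesLimitsOfSize.{0, 0} (lim : (Discrete Iι ⥤ A) ⥤ A) :=
    (constLimAdj (J := Discrete Iι) (C := A)).rightAdjoint_preservesLimits
  haveI hcolim : PreservesColimitsOfSize.{0, 0} (colim : (Discrete Jι ⥤ A) ⥤ A) :=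
    (colimConstAdj (J := Discrete Jι) (C := A)).leftAdjoint_preservesColimits
  -- iBang preserves injectives, iStar preserves projectives
  have hBangInj : ∀ X : B, Injective X → Injective (iBang.obj X) := fun X hX => by
    haveI := hX
    exact Injective.injective_of_adjoint adj₂ X
  have hStarProj : ∀ X : B, Projective X → Projective (iStar.obj X) := fun X hX =>
    adj₁.map_projective X hX
  -- the product functor applied to an FD object is a product of copies
  have prodIso : ∀ (Q : A), limit ((Functor.const (Discrete Iι)).obj Q) ≅
      (∏ᶜ fun _ : Iι => Q) :=
    fun Q => HasLimit.isoOfNatIso (Discrete.natIso (fun _ => Iso.refl Q))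
  have coprodIso : ∀ (Q : A), colimit ((Functor.const (Discrete Jι)).obj Q) ≅
      (∐ fun _ : Jι => Q) :=
    fun Q => HasColimit.isoOfNatIso (Discrete.natIso (fun _ => Iso.refl Q))
  -- iStar preserves injectives
  have hStarInj : ∀ X : B, Injective X → Injective (iStar.obj X) := by
    intro X hX
    have hFP : FinPdim X := (hGor.1 X).2 ⟨0, hX⟩
    let X' : FD B := ⟨X, hFP⟩
    have hs1X : s1.app X' ≫ r1.app X' = 𝟙 _ := by rw [← NatTrans.comp_app, hs1]; rfl
    refine injective_of_retract' (s1.app X') (r1.app X') hs1X ?_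
    haveI := hX
    haveI hQ : Injective (Φ.functor.obj (iBang.obj X)) :=
      (Φ.map_injective_iff _).2 (Injective.injective_of_adjoint adj₂ X)
    haveI : ∀ i : Iι, Injective ((fun _ : Iι => Φ.functor.obj (iBang.obj X)) i) := fun _ => hQ
    exact Injective.of_iso (prodIso (Φ.functor.obj (iBang.obj X))).symm inferInstance
  -- iBang preserves projectives
  have hBangProj : ∀ X : B, Projective X → Projective (iBang.obj X) := by
    intro X hX
    have hFP : FinPdim X := ⟨0, hX⟩
    let X' : FD B := ⟨X, hFP⟩
    have hs2X : s2.app X' ≫ r2.app X' = 𝟙 _ := by rw [← NatTrans.comp_app, hs2]; rfl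
    have hΦ : Projective (Φ.functor.obj (iBang.obj X)) := by
      refine projective_of_retract' (s2.app X') (r2.app X') hs2X ?_
      haveI hP : Projective (iStar.obj X) := adj₁.map_projective X hX
      haveI : ∀ j : Jι, Projective ((fun _ : Jι => iStar.obj X) j) := fun _ => hP
      exact Projective.of_iso (coprodIso (iStar.obj X)).symm inferInstance
    exact (Φ.map_projective_iff _).1 hΦ
  refine ⟨fun X hX => ⟨hStarInj X hX, hBangInj X hX⟩,
    fun X hX => ⟨hStarProj X hX, hBangProj X hX⟩, ?_⟩
  intro S hS h1 h2 h3
  haveI := hS.mono_f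
  haveI := hS.epi_g
  let X₁' : FD B := ⟨S.X₁, h1⟩
  let X₂' : FD B := ⟨S.X₂, h2⟩
  let X₃' : FD B := ⟨S.X₃, h3⟩
  let f' : X₁' ⟶ X₂' := ObjectProperty.homMk S.f
  let g' : X₂' ⟶ X₃' := ObjectProperty.homMk S.g
  constructor
  · -- iStar : exact + epi from right exactness, mono from retract
    have hce : (S.map iStar).Exact ∧ Epi (S.map iStar).g :=
      (S.map iStar).exact_and_epi_g_iff_g_is_cokernel.2
        ⟨CokernelCofork.mapIsColimit _ hS.exact.gIsCokernel iStar⟩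
    have hmono : Mono ((fdι B ⋙ iStar).map f') := by
      refine mono_of_retract_nat s1 r1 hs1 f' ?_
      haveI h0 : Mono (iBang.map S.f) := inferInstance
      haveI hm : Mono ((fdι B ⋙ iBang ⋙ Φ.functor).map f') :=
        inferInstanceAs (Mono (Φ.functor.map (iBang.map S.f)))
      haveI : ∀ X, Mono (((Functor.const (Discrete Iι)).map
          ((fdι B ⋙ iBang ⋙ Φ.functor).map f')).app X) := fun _ => hm
      haveI : Mono ((Functor.const (Discrete Iι)).map
          ((fdι B ⋙ iBang ⋙ Φ.functor).map f')) :=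
        NatTrans.mono_of_mono_app _
      exact inferInstanceAs (Mono ((lim : (Discrete Iι ⥤ A) ⥤ A).map
        ((Functor.const (Discrete Iι)).map ((fdι B ⋙ iBang ⋙ Φ.functor).map f'))))
    exact { exact := hce.1, mono_f := hmono, epi_g := hce.2 }
  · -- iBang : exact + mono from left exactness, epi from retract
    have hcm : (S.map iBang).Exact ∧ Mono (S.map iBang).f :=
      (S.map iBang).exact_and_mono_f_iff_f_is_kernel.2
        ⟨KernelFork.mapIsLimit _ hS.exact.fIsKernel iBang⟩
    have hepi : Epi (iBang.map S.g) := by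
      have hΦepi : Epi ((fdι B ⋙ iBang ⋙ Φ.functor).map g') := by
        refine epi_of_retract_nat s2 r2 hs2 g' ?_
        haveI h0 : Epi (iStar.map S.g) := inferInstance
        haveI : ∀ X, Epi (((Functor.const (Discrete Jι)).map
            ((fdι B ⋙ iStar).map g')).app X) := fun _ => h0
        haveI : Epi ((Functor.const (Discrete Jι)).map ((fdι B ⋙ iStar).map g')) :=
          NatTrans.epi_of_epi_app _
        exact inferInstanceAs (Epi ((colim : (Discrete Jι ⥤ A) ⥤ A).map
          ((Functor.const (Discrete Jι)).map ((fdι B ⋙ iStar).map g'))))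
      exact Φ.functor.epi_of_epi_map hΦepi
    exact { exact := hcm.1, mono_f := hcm.2, epi_g := hepi }
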